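/- If a signed graph Σ contains a negative triangle, then bdim(Σ) ≥ 3; equivalently, no 2-switching function can switch a negative triangle to all positive. -/

import Mathlib

open Finset

/-- The sign of a real number, as an integer. -/
noncomputable def sgnZ (x : ℝ) : ℤ := if 0 < x then 1 else if x < 0 then -1 else 0

/-- The standard inner product on `ℝ^k`. -/
def dotp {k : ℕ} (a b : Fin k → ℝ) : ℝ := ∑ i, a i * b i

/-- Membership in `Ω^k` where `Ω = {-1,0,1}`. -/
def InOmega {k : ℕ} (a : Fin k → ℝ) : Prop := ∀ i, a i = -1 ∨ a i = 0 ∨ a i = 1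

/-- `σ` is a sign function for the graph `G`: symmetric and `±1`-valued on edges,
so that `(G, σ)` is a signed graph. -/
def IsSignFn {V : Type*} (G : SimpleGraph V) (σ : V → V → ℤ) : Prop :=
  (∀ u v, σ u v = σ v u) ∧ ∀ u v, G.Adj u v → σ u v = 1 ∨ σ u v = -1

/-- `ζ : V → Ω^k` is a vector valued (`k`-)switching function for the signed graph:
`⟨ζ u, ζ v⟩ ≠ 0` for every edge `uv`. -/
def IsSwitching {V : Type*} (G : SimpleGraph V) {k : ℕ} (ζ : V → Fin k → ℝ) : Prop :=
  (∀ v, InOmega (ζ v)) ∧ ∀ u v, G.Adj u v → dotp (ζ u) (ζ v) ≠ 0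

/-- The sign function of the switched signed graph `Σ^ζ`:
`σ^ζ(uv) = σ(uv) · sgn ⟨ζ u, ζ v⟩`. -/
noncomputable def switchSign {V : Type*} (σ : V → V → ℤ) {k : ℕ} (ζ : V → Fin k → ℝ) : V → V → ℤ :=
  fun u v => σ u v * sgnZ (dotp (ζ u) (ζ v))

/-- `ζ : V → Ω^k` is a positive `k`-switching function (a `k`-positive function):
it switches `Σ` to the all positive signed graph. -/
def IsPositive {V : Type*} (G : SimpleGraph V) (σ : V → V → ℤ) {k : ℕ}
    (ζ : V → Fin k → ℝ) : Prop :=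
  (∀ v, InOmega (ζ v)) ∧ ∀ u v, G.Adj u v → switchSign σ ζ u v = 1

/-- The balancing dimension: the least `k ≥ 1` admitting a `k`-positive function. -/
noncomputable def bdim {V : Type*} (G : SimpleGraph V) (σ : V → V → ℤ) : ℕ :=
  sInf {k | 1 ≤ k ∧ ∃ ζ : V → Fin k → ℝ, IsPositive G σ ζ}

/-- The strong balancing dimension: the least `k ≥ 1` admitting an injective
`k`-positive function. -/
noncomputable def sbdim {V : Type*} (G : SimpleGraph V) (σ : V → V → ℤ) : ℕ :=
  sInf {k | 1 ≤ k ∧ ∃ ζ : V → Fin k → ℝ, Function.Injective ζ ∧ IsPositive G σ ζ}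

set_option maxHeartbeats 4000000 in
/-- No negative triangle among `Ω^2` vectors. -/
lemma key2 (x y z : Fin 2 → ℝ) (hx : InOmega x) (hy : InOmega y) (hz : InOmega z)
    (h1 : dotp x y ≠ 0) (h2 : dotp y z ≠ 0) (h3 : dotp z x ≠ 0) :
    sgnZ (dotp x y) * sgnZ (dotp y z) * sgnZ (dotp z x) = 1 := by
  simp only [dotp, Fin.sum_univ_two] at *
  rcases hx 0 with hx0 | hx0 | hx0 <;> rcases hx 1 with hx1 | hx1 | hx1 <;>
    rcases hy 0 with hy0 | hy0 | hy0 <;> rcases hy 1 with hy1 | hy1 | hy1 <;>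
    rcases hz 0 with hz0 | hz0 | hz0 <;> rcases hz 1 with hz1 | hz1 | hz1 <;>
    simp only [hx0, hx1, hy0, hy1, hz0, hz1] at h1 h2 h3 ⊢ <;> revert h1 h2 h3 <;> norm_num [sgnZ]

lemma sgnZ_eq_of_pos (σuv : ℤ) (h : σuv = 1 ∨ σuv = -1) {d : ℝ}
    (hp : σuv * sgnZ d = 1) : sgnZ d = σuv ∧ d ≠ 0 := by
  have hd : d ≠ 0 := by
    intro h0
    rw [h0] at hp
    simp [sgnZ] at hp
  refine ⟨?_, hd⟩
  rcases h with h | h <;> rw [h] at hp ⊢ <;> omega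

/-- Witness positive function with `k = card V * card V`. -/
lemma exists_positive {V : Type*} [Fintype V] (G : SimpleGraph V) (σ : V → V → ℤ)
    (hσ : IsSignFn G σ) :
    ∃ ζ : V → Fin (Fintype.card V * Fintype.card V) → ℝ, IsPositive G σ ζ := by
  classical
  set n := Fintype.card V with hn
  let e : V × V ≃ Fin (n * n) :=
    ((Fintype.equivFin V).prodCongr (Fintype.equivFin V)).trans finProdFinEquiv
  let g : V → V × V → ℝ := fun u pq =>
    if u = pq.1 then 1 else if u = pq.2 ∧ G.Adj pq.1 pq.2 then (σ pq.1 pq.2 : ℝ) else 0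
  refine ⟨fun u i => g u (e.symm i), ?_, ?_⟩
  · intro v i
    simp only [g]
    split_ifs with h1 h2
    · tauto
    · rcases hσ.2 _ _ h2.2 with h | h <;> rw [h] <;> norm_num
    · tauto
  · intro u v huv
    have hne : u ≠ v := G.ne_of_adj huv
    have hσuv : σ u v = 1 ∨ σ u v = -1 := hσ.2 u v huv
    have hdot : dotp (fun i => g u (e.symm i)) (fun i => g v (e.symm i))
        = 2 * (σ u v : ℝ) := by
      have hsum : dotp (fun i => g u (e.symm i)) (fun i => g v (e.symm i))
          = ∑ pq : V × V, g u pq * g v pq := by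
        rw [dotp]
        exact Equiv.sum_comp e.symm fun pq => g u pq * g v pq
      rw [hsum]
      rw [Fintype.sum_eq_add (f := fun pq => g u pq * g v pq) (u, v) (v, u)
        (by simp [hne]) ?h]
      · have h1 : g u (u, v) * g v (u, v) = σ u v := by
          simp [g, hne.symm, huv]
        have h2 : g u (v, u) * g v (v, u) = σ u v := by
          simp [g, hne, huv.symm, hσ.1 v u]
        rw [h1, h2]; ring
      · rintro ⟨p, q⟩ ⟨hpq1, hpq2⟩
        simp only [ne_eq, Prod.mk.injEq, not_and_or] at hpq1 hpq2
        rcases eq_or_ne u p with rfl | hup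
        · have hq : q ≠ v := by tauto
          simp [g, hne.symm, Ne.symm hq]
        · rcases eq_or_ne u q with rfl | huq
          · have hvp : v ≠ p := by tauto
            simp [g, hup, hvp, hne.symm]
          · simp [g, hup, huq]
    show σ u v * sgnZ (dotp _ _) = 1
    rw [hdot]
    rcases hσuv with h | h <;> rw [h] <;> norm_num [sgnZ]

/-- If `Σ` contains a negative triangle, then `bdim(Σ) ≥ 3`; equivalently, no
`2`-switching function can switch `Σ` to all positive. -/
theorem bdim_ge_three_of_negative_triangle {V : Type*} [Fintype V] (G : SimpleGraph V)
    (σ : V → V → ℤ) (hσ : IsSignFn G σ) (a b c : V)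
    (hab : G.Adj a b) (hbc : G.Adj b c) (hca : G.Adj c a)
    (hneg : σ a b * σ b c * σ c a = -1) :
    3 ≤ bdim G σ ∧ ¬ ∃ ζ : V → Fin 2 → ℝ, IsPositive G σ ζ := by
  have h2 : ¬ ∃ ζ : V → Fin 2 → ℝ, IsPositive G σ ζ := by
    rintro ⟨ζ, hΩ, hpos⟩
    obtain ⟨e1, d1⟩ := sgnZ_eq_of_pos _ (hσ.2 a b hab) (hpos a b hab)
    obtain ⟨e2, d2⟩ := sgnZ_eq_of_pos _ (hσ.2 b c hbc) (hpos b c hbc)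
    obtain ⟨e3, d3⟩ := sgnZ_eq_of_pos _ (hσ.2 c a hca) (hpos c a hca)
    have := key2 (ζ a) (ζ b) (ζ c) (hΩ a) (hΩ b) (hΩ c) d1 d2 d3
    rw [e1, e2, e3, hneg] at this
    exact absurd this (by norm_num)
  refine ⟨?_, h2⟩
  have hne : {k | 1 ≤ k ∧ ∃ ζ : V → Fin k → ℝ, IsPositive G σ ζ}.Nonempty := by
    obtain ⟨ζ, hζ⟩ := exists_positive G σ hσ
    refine ⟨Fintype.card V * Fintype.card V, ?_, ζ, hζ⟩
    have : 0 < Fintype.card V := Fintype.card_pos_iff.mpr ⟨a⟩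
    nlinarith
  apply le_csInf hne
  rintro k ⟨hk1, ζ, hζΩ, hζpos⟩
  by_contra hk3
  push_neg at hk3
  interval_cases k
  · -- k = 1 : extend to Fin 2
    apply h2
    refine ⟨fun v => ![ζ v 0, 0], ?_, ?_⟩
    · intro v i
      fin_cases i <;> simp [hζΩ v 0]
    · intro u v huv
      have := hζpos u v huv
      have hd : dotp (fun i : Fin 2 => (![ζ u 0, 0] : Fin 2 → ℝ) i)
          (fun i => (![ζ v 0, 0] : Fin 2 → ℝ) i) = dotp (ζ u) (ζ v) := by
        simp [dotp, Fin.sum_univ_two, Fin.sum_univ_one]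
      simpa only [switchSign, hd] using this
  · -- k = 2
    exact h2 ⟨ζ, hζΩ, hζpos⟩
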